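/- (Proposition 1.) Let n, p ∈ ℕ, x₁,…,xₙ ∈ ℝᵖ, s₁,…,sₙ ≥ 0, m₁,…,mₙ ≥ 0, y₁,…,yₙ ∈ ℝ, uᵢ = yᵢ − mᵢ/2, and P : ℝᵖ → ℝ. Fix βₜ ∈ ℝᵖ and a positive semidefinite symmetric p×p matrix H, and define the surrogate Q̃(β) = Σᵢ sᵢ uᵢ xᵢᵀβ − (1/2) Σᵢ sᵢ ω(xᵢᵀβₜ, mᵢ)(xᵢᵀβ)² − (1/2)(β − βₜ)ᵀH(β − βₜ) − P(β). If β′ maximizes Q̃ over ℝᵖ and ρ′ ∈ ℝ maximizes ρ ↦ pℓ(ρ·β′) over ℝ, then pℓ(ρ′·β′) ≥ pℓ(βₜ). That is, each iterate of the generalized PX-ECME (GPX-ECME) algorithm increases the penalized weighted log-likelihood. -/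

import Mathlib

open Matrix

/-- The Pólya-Gamma EM weight function: ω(t,m) = (m/(2t))·tanh(t/2) for t ≠ 0,
and ω(0,m) = m/4. -/
noncomputable def omegaPG (t m : ℝ) : ℝ :=
  if t = 0 then m / 4 else m / (2 * t) * Real.tanh (t / 2)


lemma hasDerivAt_tanh' (u : ℝ) : HasDerivAt Real.tanh (1 / Real.cosh u ^ 2) u := by
  have h := (Real.hasDerivAt_sinh u).div (Real.hasDerivAt_cosh u) (Real.cosh_pos u).ne'
  have hfun : (fun x => Real.sinh x / Real.cosh x) = Real.tanh := by
    funext x; rw [Real.tanh_eq_sinh_div_cosh]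
  rw [show (Real.sinh / Real.cosh) = Real.tanh by funext x; simp [Real.tanh_eq_sinh_div_cosh]] at h
  refine h.congr_deriv ?_
  have := Real.cosh_sq_sub_sinh_sq u
  field_simp
  nlinarith [this]

lemma tanh_le_self {t : ℝ} (ht : 0 ≤ t) : Real.tanh t ≤ t := by
  have hmono : Monotone (fun u => u - Real.tanh u) := by
    apply monotone_of_hasDerivAt_nonneg (f' := fun u => 1 - 1 / Real.cosh u ^ 2)
    · intro u; exact (hasDerivAt_id u).sub (hasDerivAt_tanh' u)
    · intro u
      have h1 : (1:ℝ) ≤ Real.cosh u ^ 2 := by nlinarith [Real.one_le_cosh u]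
      have : 1 / Real.cosh u ^ 2 ≤ 1 := by
        rw [div_le_one (by positivity)]; exact h1
      simp only [Pi.zero_apply]; linarith
  have := hmono ht
  simpa [Real.tanh_zero] using this

lemma self_le_sinh_mul_cosh {t : ℝ} (ht : 0 ≤ t) : t ≤ Real.sinh t * Real.cosh t := by
  have h := Real.self_le_sinh_iff.mpr (by linarith : (0:ℝ) ≤ 2 * t)
  rw [Real.sinh_two_mul] at h
  linarith

/-- `tanh t / t` is antitone: for `0 ≤ b ≤ a`, `b * tanh a ≤ a * tanh b`. -/
lemma ratio_anti {b a : ℝ} (hb : 0 ≤ b) (hab : b ≤ a) :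
    b * Real.tanh a ≤ a * Real.tanh b := by
  set g : ℝ → ℝ := fun u => u * Real.tanh b - b * Real.tanh u with hg
  have hmono : MonotoneOn g (Set.Ici b) := by
    apply monotoneOn_of_hasDerivWithinAt_nonneg (convex_Ici b)
      (f' := fun u => Real.tanh b - b * (1 / Real.cosh u ^ 2))
    · have hd : Differentiable ℝ Real.tanh := fun u => (hasDerivAt_tanh' u).differentiableAt
      have hc : Continuous Real.tanh := hd.continuous
      exact ((continuous_id.mul continuous_const).sub (continuous_const.mul hc)).continuousOn
    · intro u hu
      have h := (((hasDerivAt_id u).mul_const (Real.tanh b)).sub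
        ((hasDerivAt_tanh' u).const_mul b))
      simp only [one_mul] at h
      exact h.hasDerivWithinAt
    · intro u hu
      rw [interior_Ici] at hu
      have hub : b ≤ u := le_of_lt hu
      have hcb : Real.cosh b ≤ Real.cosh u := by
        rw [Real.cosh_le_cosh, abs_of_nonneg hb, abs_of_nonneg (hb.trans hub)]; exact hub
      have hc2 : Real.cosh b ^ 2 ≤ Real.cosh u ^ 2 := by
        nlinarith [Real.cosh_pos b, Real.cosh_pos u]
      have h1 : b / Real.cosh u ^ 2 ≤ b / Real.cosh b ^ 2 :=
        div_le_div_of_nonneg_left hb (by positivity) hc2 |>.trans_eq rfl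
      have h2 : b / Real.cosh b ^ 2 ≤ Real.tanh b := by
        rw [Real.tanh_eq_sinh_div_cosh, div_le_div_iff₀ (by positivity) (Real.cosh_pos b)]
        nlinarith [self_le_sinh_mul_cosh hb, Real.cosh_pos b]
      have : b * (1 / Real.cosh u ^ 2) ≤ Real.tanh b := by
        rw [mul_one_div]; exact h1.trans h2
      linarith
  have := hmono (Set.self_mem_Ici) (Set.mem_Ici.mpr hab) hab
  simp only [hg] at this
  linarith

lemma logcosh_key {b : ℝ} (hb : 0 ≤ b) (K : ℝ)
    (hKlo : ∀ t, 0 ≤ t → t ≤ b → K * t ≤ Real.tanh t)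
    (hKhi : ∀ t, b ≤ t → Real.tanh t ≤ K * t)
    {a : ℝ} (ha : 0 ≤ a) :
    Real.log (Real.cosh a) ≤ Real.log (Real.cosh b) + K / 2 * (a ^ 2 - b ^ 2) := by
  set G : ℝ → ℝ := fun u => K / 2 * u ^ 2 - Real.log (Real.cosh u) with hGdef
  have hderiv : ∀ u : ℝ, HasDerivAt G (K * u - Real.tanh u) u := by
    intro u
    have h1 : HasDerivAt (fun u : ℝ => K / 2 * u ^ 2) (K * u) u := by
      have := (hasDerivAt_pow 2 u).const_mul (K / 2)
      refine this.congr_deriv ?_; push_cast; ring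
    have h2 : HasDerivAt (fun u : ℝ => Real.log (Real.cosh u)) (Real.tanh u) u := by
      have := (Real.hasDerivAt_cosh u).log (Real.cosh_pos u).ne'
      rwa [← Real.tanh_eq_sinh_div_cosh] at this
    exact h1.sub h2
  have hcont : Continuous G := by
    have : Differentiable ℝ G := fun u => (hderiv u).differentiableAt
    exact this.continuous
  have hGoal : G b ≤ G a := by
    rcases le_total b a with hle | hle
    · have hmono : MonotoneOn G (Set.Ici b) := by
        apply monotoneOn_of_hasDerivWithinAt_nonneg (convex_Ici b)
          (f' := fun u => K * u - Real.tanh u) hcont.continuousOn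
        · intro u _; exact (hderiv u).hasDerivWithinAt
        · intro u hu
          rw [interior_Ici] at hu
          have := hKhi u (le_of_lt hu)
          linarith
      exact hmono Set.self_mem_Ici (Set.mem_Ici.mpr hle) hle
    · have hanti : AntitoneOn G (Set.Icc 0 b) := by
        apply antitoneOn_of_hasDerivWithinAt_nonpos (convex_Icc 0 b)
          (f' := fun u => K * u - Real.tanh u) hcont.continuousOn
        · intro u _; exact (hderiv u).hasDerivWithinAt
        · intro u hu
          rw [interior_Icc] at hu
          have := hKlo u (le_of_lt hu.1) (le_of_lt hu.2)
          linarith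
      exact hanti (Set.mem_Icc.mpr ⟨ha, hle⟩) (Set.mem_Icc.mpr ⟨hb, le_refl b⟩) hle
  simp only [hGdef] at hGoal
  linarith

lemma logcosh_omega (t t0 : ℝ) :
    Real.log (Real.cosh (t / 2)) ≤
      Real.log (Real.cosh (t0 / 2)) + (if t0 = 0 then (1:ℝ)/4 else 1/(2*t0) * Real.tanh (t0/2)) / 2 * (t ^ 2 - t0 ^ 2) := by
  set ω : ℝ := if t0 = 0 then (1:ℝ)/4 else 1/(2*t0) * Real.tanh (t0/2) with hω
  set a : ℝ := |t| / 2 with hadef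
  set b : ℝ := |t0| / 2 with hbdef
  have ha : 0 ≤ a := by positivity
  have hb : 0 ≤ b := by positivity
  have hca : Real.cosh a = Real.cosh (t / 2) := by
    have : |t| / 2 = |t / 2| := by rw [abs_div]; norm_num
    rw [hadef, this, Real.cosh_abs]
  have hcb : Real.cosh b = Real.cosh (t0 / 2) := by
    have : |t0| / 2 = |t0 / 2| := by rw [abs_div]; norm_num
    rw [hbdef, this, Real.cosh_abs]
  have ha2 : a ^ 2 = t ^ 2 / 4 := by rw [hadef]; rw [div_pow, sq_abs]; ring
  have hb2 : b ^ 2 = t0 ^ 2 / 4 := by rw [hbdef]; rw [div_pow, sq_abs]; ring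
  have key : Real.log (Real.cosh a) ≤ Real.log (Real.cosh b) + (4 * ω) / 2 * (a ^ 2 - b ^ 2) := by
    apply logcosh_key hb (4 * ω) ?_ ?_ ha
    · intro u hu0 hub
      by_cases ht0 : t0 = 0
      · have hb0 : b = 0 := by rw [hbdef, ht0]; simp
        have : u = 0 := le_antisymm (hub.trans_eq hb0) hu0
        simp [this, Real.tanh_zero]
      · have hbpos : 0 < b := by
          rw [hbdef]; have := abs_pos.mpr ht0; positivity
        have hK : 4 * ω = Real.tanh b / b := by
          rw [hω, if_neg ht0, hbdef]
          rcases lt_or_gt_of_ne ht0 with hneg | hpos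
          · rw [abs_of_neg hneg]
            have : Real.tanh (-t0 / 2) = - Real.tanh (t0 / 2) := by
              rw [neg_div, Real.tanh_neg]
            rw [this]
            field_simp
            ring
          · rw [abs_of_pos hpos]; field_simp; ring
        have hr := ratio_anti hu0 hub
        rw [hK]
        rw [div_mul_eq_mul_div, div_le_iff₀ hbpos]
        linarith
    · intro u hbu
      by_cases ht0 : t0 = 0
      · have hb0 : b = 0 := by rw [hbdef, ht0]; simp
        have hu0 : 0 ≤ u := hb0 ▸ hbu
        have h4 : 4 * ω = 1 := by rw [hω, if_pos ht0]; norm_num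
        rw [h4, one_mul]; exact tanh_le_self hu0
      · have hbpos : 0 < b := by
          rw [hbdef]; have := abs_pos.mpr ht0; positivity
        have hK : 4 * ω = Real.tanh b / b := by
          rw [hω, if_neg ht0, hbdef]
          rcases lt_or_gt_of_ne ht0 with hneg | hpos
          · rw [abs_of_neg hneg]
            have : Real.tanh (-t0 / 2) = - Real.tanh (t0 / 2) := by
              rw [neg_div, Real.tanh_neg]
            rw [this]
            field_simp
            ring
          · rw [abs_of_pos hpos]; field_simp; ring
        have hr := ratio_anti hb hbu
        rw [hK, div_mul_eq_mul_div, le_div_iff₀ hbpos]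
        linarith
  rw [hca, hcb, ha2, hb2] at key
  calc Real.log (Real.cosh (t/2)) ≤ Real.log (Real.cosh (t0/2)) + 4 * ω / 2 * (t^2/4 - t0^2/4) := key
    _ = Real.log (Real.cosh (t0/2)) + ω / 2 * (t^2 - t0^2) := by ring

lemma log_one_add_exp (t : ℝ) :
    Real.log (1 + Real.exp t) = t / 2 + Real.log 2 + Real.log (Real.cosh (t / 2)) := by
  have h : 1 + Real.exp t = Real.exp (t / 2) * (2 * Real.cosh (t / 2)) := by
    rw [Real.cosh_eq]
    rw [show (2 : ℝ) * ((Real.exp (t/2) + Real.exp (-(t/2))) / 2)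
        = Real.exp (t/2) + Real.exp (-(t/2)) by ring]
    rw [mul_add, ← Real.exp_add, ← Real.exp_add]
    norm_num
    ring
  rw [h, Real.log_mul (Real.exp_pos _).ne' (by positivity),
    Real.log_mul two_ne_zero (Real.cosh_pos _).ne', Real.log_exp]
  ring

lemma omegaPG_eq (t0 m : ℝ) :
    omegaPG t0 m = m * (if t0 = 0 then (1:ℝ)/4 else 1/(2*t0) * Real.tanh (t0/2)) := by
  unfold omegaPG
  by_cases h : t0 = 0
  · rw [if_pos h, if_pos h]; ring
  · rw [if_neg h, if_neg h]; ring

lemma per_obs (mm t t0 : ℝ) (hm : 0 ≤ mm) :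
    mm / 2 * t0 - mm * Real.log (1 + Real.exp t0) + 1 / 2 * omegaPG t0 mm * t0 ^ 2 ≤
      mm / 2 * t - mm * Real.log (1 + Real.exp t) + 1 / 2 * omegaPG t0 mm * t ^ 2 := by
  set ω1 : ℝ := if t0 = 0 then (1:ℝ)/4 else 1/(2*t0) * Real.tanh (t0/2) with hω1
  have hom : omegaPG t0 mm = mm * ω1 := omegaPG_eq t0 mm
  have hkey := logcosh_omega t t0
  rw [← hω1] at hkey
  have hmul := mul_le_mul_of_nonneg_left hkey hm
  rw [log_one_add_exp t, log_one_add_exp t0, hom]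
  nlinarith [hmul]

/-- The penalized weighted observed log-likelihood
pℓ(β) = Σᵢ sᵢ[yᵢ xᵢᵀβ − mᵢ log(1 + exp(xᵢᵀβ))] − P(β). -/
noncomputable def pLogLik (n p : ℕ) (x : Fin n → Fin p → ℝ) (s m y : Fin n → ℝ)
    (P : (Fin p → ℝ) → ℝ) (β : Fin p → ℝ) : ℝ :=
  (∑ i, s i * (y i * (x i ⬝ᵥ β) - m i * Real.log (1 + Real.exp (x i ⬝ᵥ β)))) - P β

/-- The surrogate parameter-expanded Q-function of the GPX-ECME algorithm:
Q̃(β) = Σᵢ sᵢ uᵢ xᵢᵀβ − (1/2) Σᵢ sᵢ ω(xᵢᵀβₜ, mᵢ)(xᵢᵀβ)²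
        − (1/2)(β − βₜ)ᵀH(β − βₜ) − P(β). -/
noncomputable def QtildeFun (n p : ℕ) (x : Fin n → Fin p → ℝ) (s m y : Fin n → ℝ)
    (P : (Fin p → ℝ) → ℝ) (H : Matrix (Fin p) (Fin p) ℝ) (βt : Fin p → ℝ)
    (β : Fin p → ℝ) : ℝ :=
  (∑ i, s i * (y i - m i / 2) * (x i ⬝ᵥ β))
    - (1 / 2) * (∑ i, s i * omegaPG (x i ⬝ᵥ βt) (m i) * (x i ⬝ᵥ β) ^ 2)
    - (1 / 2) * ((β - βt) ⬝ᵥ (H *ᵥ (β - βt))) - P β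

/-- Proposition 1: each iterate of the generalized PX-ECME (GPX-ECME) algorithm
increases the penalized weighted log-likelihood. -/
theorem gpxecme_update_increases_penalized_loglik (n p : ℕ) (x : Fin n → Fin p → ℝ)
    (s m y : Fin n → ℝ) (hs : ∀ i, 0 ≤ s i) (hm : ∀ i, 0 ≤ m i)
    (P : (Fin p → ℝ) → ℝ) (βt : Fin p → ℝ) (H : Matrix (Fin p) (Fin p) ℝ)
    (hHsymm : H.IsSymm) (hHpsd : ∀ z : Fin p → ℝ, 0 ≤ z ⬝ᵥ (H *ᵥ z))
    (β' : Fin p → ℝ) (ρ' : ℝ)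
    (hmax : ∀ β : Fin p → ℝ,
      QtildeFun n p x s m y P H βt β ≤ QtildeFun n p x s m y P H βt β')
    (hρ : ∀ ρ : ℝ, pLogLik n p x s m y P (ρ • β') ≤ pLogLik n p x s m y P (ρ' • β')) :
    pLogLik n p x s m y P (ρ' • β') ≥ pLogLik n p x s m y P βt := by
  classical
  have hexp : ∀ β : Fin p → ℝ,
      pLogLik n p x s m y P β - QtildeFun n p x s m y P H βt β =
      (∑ i, s i * (m i / 2 * (x i ⬝ᵥ β) - m i * Real.log (1 + Real.exp (x i ⬝ᵥ β))
          + 1 / 2 * omegaPG (x i ⬝ᵥ βt) (m i) * (x i ⬝ᵥ β) ^ 2))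
        + 1 / 2 * ((β - βt) ⬝ᵥ (H *ᵥ (β - βt))) := by
    intro β
    simp only [pLogLik, QtildeFun]
    have hsum : (∑ i, s i * (m i / 2 * (x i ⬝ᵥ β) - m i * Real.log (1 + Real.exp (x i ⬝ᵥ β))
          + 1 / 2 * omegaPG (x i ⬝ᵥ βt) (m i) * (x i ⬝ᵥ β) ^ 2)) =
        (∑ i, s i * (y i * (x i ⬝ᵥ β) - m i * Real.log (1 + Real.exp (x i ⬝ᵥ β))))
          - (∑ i, s i * (y i - m i / 2) * (x i ⬝ᵥ β))
          + 1 / 2 * (∑ i, s i * omegaPG (x i ⬝ᵥ βt) (m i) * (x i ⬝ᵥ β) ^ 2) := by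
      rw [Finset.mul_sum, ← Finset.sum_sub_distrib, ← Finset.sum_add_distrib]
      exact Finset.sum_congr rfl fun i _ => by ring
    rw [hsum]
    ring
  have hq0 : ((βt - βt) ⬝ᵥ (H *ᵥ (βt - βt))) = 0 := by
    simp [sub_self]
  have hquad : 0 ≤ ((β' - βt) ⬝ᵥ (H *ᵥ (β' - βt))) := hHpsd _
  have hsumle : (∑ i, s i * (m i / 2 * (x i ⬝ᵥ βt) - m i * Real.log (1 + Real.exp (x i ⬝ᵥ βt))
          + 1 / 2 * omegaPG (x i ⬝ᵥ βt) (m i) * (x i ⬝ᵥ βt) ^ 2)) ≤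
      (∑ i, s i * (m i / 2 * (x i ⬝ᵥ β') - m i * Real.log (1 + Real.exp (x i ⬝ᵥ β'))
          + 1 / 2 * omegaPG (x i ⬝ᵥ βt) (m i) * (x i ⬝ᵥ β') ^ 2)) := by
    apply Finset.sum_le_sum
    intro i _
    exact mul_le_mul_of_nonneg_left
      (per_obs (m i) (x i ⬝ᵥ β') (x i ⬝ᵥ βt) (hm i)) (hs i)
  have hQ := hmax βt
  have he1 := hexp β'
  have he2 := hexp βt
  rw [hq0] at he2
  have h1 : pLogLik n p x s m y P βt ≤ pLogLik n p x s m y P β' := by linarith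
  have h2 := hρ 1
  rw [one_smul] at h2
  exact le_trans h1 h2
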